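/- Let f, g be probability measures on ℝ with finite second moments and let (X,Y), (X*,Y*) be two independent optimal W₂ couplings of (f,g). Let θ be uniform on [0,2π), independent of everything. Define f' = Law(X cos θ − X* sin θ) and g' = Law(Y cos θ − Y* sin θ). Then W₂²(f', g') ≤ W₂²(f, g), i.e. the Kac collision map ν ↦ B[ν,ν] is non-expanding in W₂. -/

import Mathlib

open MeasureTheory Real

/-- The uniform probability measure on `[0, 2π)`. -/
noncomputable def thetaUnif : Measure ℝ :=
  (ENNReal.ofReal (2 * π))⁻¹ • (volume.restrict (Set.Ico 0 (2 * π)))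

/-- The Kac collision map: `B[ν₁,ν₂]` is the law of `X cos θ + Y sin θ`
where `X ~ ν₁`, `Y ~ ν₂` and `θ` is uniform on `[0,2π)`, all independent. -/
noncomputable def collB (ν₁ ν₂ : Measure ℝ) : Measure ℝ :=
  Measure.map (fun p : ℝ × ℝ × ℝ => p.1 * Real.cos p.2.2 + p.2.1 * Real.sin p.2.2)
    (ν₁.prod (ν₂.prod thetaUnif))

/-- Squared 2-Wasserstein distance on probability measures on `ℝ`,
defined as the infimum of the quadratic transport cost over couplings. -/
noncomputable def W2sq (f g : Measure ℝ) : ℝ :=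
  sInf { c : ℝ | ∃ μ : Measure (ℝ × ℝ), IsProbabilityMeasure μ ∧
    μ.map Prod.fst = f ∧ μ.map Prod.snd = g ∧ c = ∫ p, (p.1 - p.2) ^ 2 ∂μ }

lemma thetaUnif_integral (h : ℝ → ℝ) :
    ∫ t, h t ∂thetaUnif = (2 * π)⁻¹ * ∫ t in (0:ℝ)..(2*π), h t := by
  rw [thetaUnif, MeasureTheory.integral_smul_measure, ENNReal.toReal_inv,
    ENNReal.toReal_ofReal (by positivity),
    setIntegral_congr_set (Ico_ae_eq_Ioc (α := ℝ) (μ := volume)),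
    ← intervalIntegral.integral_of_le (by positivity)]
  simp [smul_eq_mul]

lemma theta_cos_sq : ∫ t, Real.cos t ^ 2 ∂thetaUnif = 1 / 2 := by
  rw [thetaUnif_integral, integral_cos_sq]
  have : π ≠ 0 := pi_ne_zero
  simp [Real.sin_two_pi, Real.cos_two_pi]
  field_simp

lemma theta_sin_sq : ∫ t, Real.sin t ^ 2 ∂thetaUnif = 1 / 2 := by
  rw [thetaUnif_integral, integral_sin_sq]
  have : π ≠ 0 := pi_ne_zero
  simp [Real.sin_two_pi, Real.cos_two_pi]
  field_simp

lemma theta_cos_sin : ∫ t, Real.cos t * Real.sin t ∂thetaUnif = 0 := by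
  have : ∀ t : ℝ, Real.cos t * Real.sin t = Real.sin t * Real.cos t := fun t => mul_comm _ _
  simp_rw [this]
  rw [thetaUnif_integral, integral_sin_mul_cos₁]
  simp [Real.sin_two_pi]

open ProbabilityTheory in
theorem kac_collision_W2_nonexpanding
    {Ω : Type*} [MeasurableSpace Ω] (P : Measure Ω) [IsProbabilityMeasure P]
    (f g : Measure ℝ) [IsProbabilityMeasure f] [IsProbabilityMeasure g]
    (hf2 : Integrable (fun x : ℝ => x ^ 2) f) (hg2 : Integrable (fun x : ℝ => x ^ 2) g)
    (X Y Xs Ys Θ : Ω → ℝ) (hX : Measurable X) (hY : Measurable Y)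
    (hXs : Measurable Xs) (hYs : Measurable Ys) (hΘ : Measurable Θ)
    (hlawX : P.map X = f) (hlawY : P.map Y = g)
    (hlawXs : P.map Xs = f) (hlawYs : P.map Ys = g)
    (hlawΘ : P.map Θ = thetaUnif)
    (hopt : ∫ ω, (X ω - Y ω) ^ 2 ∂P = W2sq f g)
    (hopts : ∫ ω, (Xs ω - Ys ω) ^ 2 ∂P = W2sq f g)
    (hindep : IndepFun (fun ω => (X ω, Y ω)) (fun ω => (Xs ω, Ys ω)) P)
    (hindepΘ : IndepFun (fun ω => (X ω, Y ω, Xs ω, Ys ω)) Θ P) :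
    W2sq (P.map (fun ω => X ω * Real.cos (Θ ω) - Xs ω * Real.sin (Θ ω)))
        (P.map (fun ω => Y ω * Real.cos (Θ ω) - Ys ω * Real.sin (Θ ω)))
      ≤ W2sq f g := by
  -- abbreviations
  set A : Ω → ℝ := fun ω => X ω * Real.cos (Θ ω) - Xs ω * Real.sin (Θ ω) with hA
  set B : Ω → ℝ := fun ω => Y ω * Real.cos (Θ ω) - Ys ω * Real.sin (Θ ω) with hB
  have hAm : Measurable A := ((hX.mul (hΘ.cos)).sub (hXs.mul (hΘ.sin)))
  have hBm : Measurable B := ((hY.mul (hΘ.cos)).sub (hYs.mul (hΘ.sin)))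
  set U : Ω → ℝ := fun ω => X ω - Y ω with hU
  set V : Ω → ℝ := fun ω => Xs ω - Ys ω with hV
  have hUm : Measurable U := hX.sub hY
  have hVm : Measurable V := hXs.sub hYs
  -- second moments
  have hint : ∀ (Z : Ω → ℝ), Measurable Z → P.map Z = f ∨ P.map Z = g →
      Integrable (fun ω => Z ω ^ 2) P := by
    intro Z hZ hlaw
    have h2 : Integrable (fun x : ℝ => x ^ 2) (P.map Z) := by
      rcases hlaw with h | h <;> rw [h] <;> assumption
    exact (integrable_map_measure h2.1 hZ.aemeasurable).1 h2
  have hXL2 : MemLp X 2 P := (memLp_two_iff_integrable_sq hX.aestronglyMeasurable).2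
    (hint X hX (Or.inl hlawX))
  have hYL2 : MemLp Y 2 P := (memLp_two_iff_integrable_sq hY.aestronglyMeasurable).2
    (hint Y hY (Or.inr hlawY))
  have hXsL2 : MemLp Xs 2 P := (memLp_two_iff_integrable_sq hXs.aestronglyMeasurable).2
    (hint Xs hXs (Or.inl hlawXs))
  have hYsL2 : MemLp Ys 2 P := (memLp_two_iff_integrable_sq hYs.aestronglyMeasurable).2
    (hint Ys hYs (Or.inr hlawYs))
  have hU2 : Integrable (fun ω => U ω ^ 2) P :=
    (memLp_two_iff_integrable_sq (hUm.aestronglyMeasurable)).1 (hXL2.sub hYL2)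
  have hV2 : Integrable (fun ω => V ω ^ 2) P :=
    (memLp_two_iff_integrable_sq (hVm.aestronglyMeasurable)).1 (hXsL2.sub hYsL2)
  -- independence of transforms
  have hUV : IndepFun U V P :=
    hindep.comp (φ := fun p : ℝ × ℝ => p.1 - p.2) (ψ := fun p : ℝ × ℝ => p.1 - p.2)
      (measurable_fst.sub measurable_snd) (measurable_fst.sub measurable_snd)
  have hUVint : Integrable (fun ω => U ω * V ω) P :=
    hUV.integrable_mul ((hXL2.sub hYL2).integrable one_le_two)
      ((hXsL2.sub hYsL2).integrable one_le_two)
  -- law of Θ: pushforward integrals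
  have hΘint : ∀ (h : ℝ → ℝ), Measurable h → ∫ ω, h (Θ ω) ∂P = ∫ t, h t ∂thetaUnif := by
    intro h hh
    rw [← hlawΘ, integral_map hΘ.aemeasurable hh.aestronglyMeasurable]
  -- independence-based splitting of integrals
  have hsplit : ∀ (φ : Ω → ℝ) (h : ℝ → ℝ), Measurable φ → Measurable h →
      IndepFun φ (fun ω => h (Θ ω)) P →
      ∫ ω, φ ω * h (Θ ω) ∂P = (∫ ω, φ ω ∂P) * ∫ t, h t ∂thetaUnif := by
    intro φ h hφ hh hi
    have := hi.integral_mul_eq_mul_integral hφ.aestronglyMeasurable (hh.comp hΘ).aestronglyMeasurable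
    rw [← hΘint h hh]
    exact this
  -- independence instances
  have hiU2 : IndepFun (fun ω => U ω ^ 2) (fun ω => Real.cos (Θ ω) ^ 2) P :=
    hindepΘ.comp (φ := fun q : ℝ × ℝ × ℝ × ℝ => (q.1 - q.2.1) ^ 2)
      (ψ := fun t => Real.cos t ^ 2) (by fun_prop) (by fun_prop)
  have hiV2 : IndepFun (fun ω => V ω ^ 2) (fun ω => Real.sin (Θ ω) ^ 2) P :=
    hindepΘ.comp (φ := fun q : ℝ × ℝ × ℝ × ℝ => (q.2.2.1 - q.2.2.2) ^ 2)
      (ψ := fun t => Real.sin t ^ 2) (by fun_prop) (by fun_prop)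
  have hiUV : IndepFun (fun ω => U ω * V ω)
      (fun ω => Real.cos (Θ ω) * Real.sin (Θ ω)) P :=
    hindepΘ.comp (φ := fun q : ℝ × ℝ × ℝ × ℝ => (q.1 - q.2.1) * (q.2.2.1 - q.2.2.2))
      (ψ := fun t => Real.cos t * Real.sin t) (by fun_prop) (by fun_prop)
  -- pointwise expansion
  have hpt : ∀ ω, (A ω - B ω) ^ 2 = U ω ^ 2 * Real.cos (Θ ω) ^ 2
      + V ω ^ 2 * Real.sin (Θ ω) ^ 2
      - 2 * (U ω * V ω * (Real.cos (Θ ω) * Real.sin (Θ ω))) := by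
    intro ω; simp only [hA, hB, hU, hV]; ring
  -- integrability of the three pieces
  have hi1 : Integrable (fun ω => U ω ^ 2 * Real.cos (Θ ω) ^ 2) P := by
    refine hU2.mono' ((hUm.pow_const 2).mul ((hΘ.cos).pow_const 2)).aestronglyMeasurable
      (Filter.Eventually.of_forall fun ω => ?_)
    rw [Real.norm_eq_abs, abs_mul]
    calc |U ω ^ 2| * |Real.cos (Θ ω) ^ 2| ≤ |U ω ^ 2| * 1 := by
          gcongr
          rw [abs_le]; constructor <;> nlinarith [Real.neg_one_le_cos (Θ ω), Real.cos_le_one (Θ ω)]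
      _ = U ω ^ 2 := by rw [mul_one, abs_of_nonneg (sq_nonneg _)]
  have hi2 : Integrable (fun ω => V ω ^ 2 * Real.sin (Θ ω) ^ 2) P := by
    refine hV2.mono' ((hVm.pow_const 2).mul ((hΘ.sin).pow_const 2)).aestronglyMeasurable
      (Filter.Eventually.of_forall fun ω => ?_)
    rw [Real.norm_eq_abs, abs_mul]
    calc |V ω ^ 2| * |Real.sin (Θ ω) ^ 2| ≤ |V ω ^ 2| * 1 := by
          gcongr
          rw [abs_le]; constructor <;> nlinarith [Real.neg_one_le_sin (Θ ω), Real.sin_le_one (Θ ω)]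
      _ = V ω ^ 2 := by rw [mul_one, abs_of_nonneg (sq_nonneg _)]
  have hi3 : Integrable (fun ω => U ω * V ω * (Real.cos (Θ ω) * Real.sin (Θ ω))) P := by
    refine hUVint.abs.mono' ((hUm.mul hVm).mul ((hΘ.cos).mul (hΘ.sin))).aestronglyMeasurable
      (Filter.Eventually.of_forall fun ω => ?_)
    rw [Real.norm_eq_abs, abs_mul]
    calc |U ω * V ω| * |Real.cos (Θ ω) * Real.sin (Θ ω)| ≤ |U ω * V ω| * 1 := by
          gcongr
          rw [abs_mul]
          have h1 := Real.abs_cos_le_one (Θ ω)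
          have h2 := Real.abs_sin_le_one (Θ ω)
          nlinarith [abs_nonneg (Real.cos (Θ ω)), abs_nonneg (Real.sin (Θ ω))]
      _ = |U ω * V ω| := mul_one _
  -- the transport cost of the natural coupling equals W2sq f g
  have hcost : ∫ ω, (A ω - B ω) ^ 2 ∂P = W2sq f g := by
    calc ∫ ω, (A ω - B ω) ^ 2 ∂P
        = ∫ ω, (U ω ^ 2 * Real.cos (Θ ω) ^ 2 + V ω ^ 2 * Real.sin (Θ ω) ^ 2
            - 2 * (U ω * V ω * (Real.cos (Θ ω) * Real.sin (Θ ω)))) ∂P := by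
          exact integral_congr_ae (Filter.Eventually.of_forall hpt)
      _ = (∫ ω, U ω ^ 2 * Real.cos (Θ ω) ^ 2 ∂P)
            + (∫ ω, V ω ^ 2 * Real.sin (Θ ω) ^ 2 ∂P)
            - 2 * ∫ ω, U ω * V ω * (Real.cos (Θ ω) * Real.sin (Θ ω)) ∂P := by
          have h := integral_sub (hi1.add hi2) (hi3.const_mul 2)
          simp only [Pi.add_apply] at h
          rw [h, integral_add hi1 hi2, integral_const_mul]
      _ = (∫ ω, U ω ^ 2 ∂P) * (1 / 2) + (∫ ω, V ω ^ 2 ∂P) * (1 / 2)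
            - 2 * ((∫ ω, U ω * V ω ∂P) * 0) := by
          rw [hsplit (fun ω => U ω ^ 2) (fun t => Real.cos t ^ 2) (hUm.pow_const 2)
              (by fun_prop) hiU2,
            hsplit (fun ω => V ω ^ 2) (fun t => Real.sin t ^ 2) (hVm.pow_const 2)
              (by fun_prop) hiV2,
            hsplit (fun ω => U ω * V ω) (fun t => Real.cos t * Real.sin t) (hUm.mul hVm)
              (by fun_prop) hiUV,
            theta_cos_sq, theta_sin_sq, theta_cos_sin]
      _ = W2sq f g := by rw [hopt, hopts]; ring
  -- the coupling
  set T : Ω → ℝ × ℝ := fun ω => (A ω, B ω) with hT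
  have hTm : Measurable T := hAm.prodMk hBm
  have hmem : W2sq f g ∈ { c : ℝ | ∃ μ : Measure (ℝ × ℝ), IsProbabilityMeasure μ ∧
      μ.map Prod.fst = P.map A ∧ μ.map Prod.snd = P.map B ∧
      c = ∫ p, (p.1 - p.2) ^ 2 ∂μ } := by
    refine ⟨P.map T, Measure.isProbabilityMeasure_map hTm.aemeasurable, ?_, ?_, ?_⟩
    · rw [Measure.map_map measurable_fst hTm]; rfl
    · rw [Measure.map_map measurable_snd hTm]; rfl
    · rw [integral_map hTm.aemeasurable (f := fun p : ℝ × ℝ => (p.1 - p.2) ^ 2)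
        ((measurable_fst.sub measurable_snd).pow_const 2).aestronglyMeasurable]
      exact hcost.symm
  have hbdd : BddBelow { c : ℝ | ∃ μ : Measure (ℝ × ℝ), IsProbabilityMeasure μ ∧
      μ.map Prod.fst = P.map A ∧ μ.map Prod.snd = P.map B ∧
      c = ∫ p, (p.1 - p.2) ^ 2 ∂μ } := by
    refine ⟨0, fun c hc => ?_⟩
    obtain ⟨μ, _, _, _, hcc⟩ := hc
    rw [hcc]
    exact integral_nonneg fun p => sq_nonneg _
  exact csInf_le hbdd hmem
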